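/- Let r > 0 and let {v₀,v₁,w} and {v₀',v₁',w'} be positive oriented orthonormal systems. Write α(t,v₀,v₁,w) = √(1+r²) w + r cos(2πt) v₁ + r sin(2πt) v₀. Then there exists θ ∈ ℝ such that α(t,v₀,v₁,w) = α(t+θ,v₀',v₁',w') for all t ∈ ℝ if and only if w = w'. -/

import Mathlib

noncomputable section

open Real

/-- The Minkowski inner product on ℝ³. -/
def mink (v w : Fin 3 → ℝ) : ℝ := v 0 * w 0 + v 1 * w 1 - v 2 * w 2

/-- The twisted cross product on ℝ³. -/
def mcross (v w : Fin 3 → ℝ) : Fin 3 → ℝ :=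
  ![v 2 * w 1 - v 1 * w 2, v 0 * w 2 - v 2 * w 0, v 0 * w 1 - v 1 * w 0]

/-- A positive oriented orthonormal system with respect to the Minkowski metric. -/
def posOrth (v₀ v₁ w : Fin 3 → ℝ) : Prop :=
  mink v₀ v₁ = 0 ∧ mink v₀ w = 0 ∧ mink v₁ w = 0 ∧
  mink v₀ v₀ = 1 ∧ mink v₁ v₁ = 1 ∧ mink w w = -1 ∧
  mcross v₀ v₁ = w

/-- Membership in the hyperbolic plane ℍ ⊂ ℝ³. -/
def inH (x : Fin 3 → ℝ) : Prop := x 2 ^ 2 - x 0 ^ 2 - x 1 ^ 2 = 1 ∧ 0 < x 2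

lemma mink_comm (v w : Fin 3 → ℝ) : mink v w = mink w v := by simp [mink]; ring

lemma mink_sub_left (u v z : Fin 3 → ℝ) : mink (u - v) z = mink u z - mink v z := by
  simp [mink]; ring

lemma mink_add_left (u v z : Fin 3 → ℝ) : mink (u + v) z = mink u z + mink v z := by
  simp [mink]; ring

lemma mink_smul_left (c : ℝ) (u z : Fin 3 → ℝ) : mink (c • u) z = c * mink u z := by
  simp [mink]; ring

lemma span_zero (a b x : Fin 3 → ℝ) (h1 : mink a a = 1) (h2 : mink b b = 1)
    (h3 : mink a b = 0) (e0 : mink x a = 0) (e1 : mink x b = 0)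
    (e2 : mink x (mcross a b) = 0) : x = 0 := by
  simp only [mink, mcross, Matrix.cons_val_zero, Matrix.cons_val_one, Matrix.head_cons,
    Matrix.cons_val_two, Matrix.tail_cons] at h1 h2 h3 e0 e1 e2
  funext i
  fin_cases i <;> simp only [Pi.zero_apply]
  · show x 0 = 0
    linear_combination (b 1 * (a 0 * b 1 - a 1 * b 0) - b 2 * (a 0 * b 2 - a 2 * b 0)) * e0 +
      (-(a 1 * (a 0 * b 1 - a 1 * b 0)) + a 2 * (a 0 * b 2 - a 2 * b 0)) * e1 +
      (-(a 2 * b 1 - a 1 * b 2)) * e2 +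
      (x 0 * (a 0 * b 0 + a 1 * b 1 - a 2 * b 2)) * h3 +
      (-(x 0) * (b 0 * b 0 + b 1 * b 1 - b 2 * b 2)) * h1 + (-(x 0)) * h2
  · show x 1 = 0
    linear_combination (b 2 * (a 2 * b 1 - a 1 * b 2) - b 0 * (a 0 * b 1 - a 1 * b 0)) * e0 +
      (a 0 * (a 0 * b 1 - a 1 * b 0) - a 2 * (a 2 * b 1 - a 1 * b 2)) * e1 +
      (-(a 0 * b 2 - a 2 * b 0)) * e2 +
      (x 1 * (a 0 * b 0 + a 1 * b 1 - a 2 * b 2)) * h3 +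
      (-(x 1) * (b 0 * b 0 + b 1 * b 1 - b 2 * b 2)) * h1 + (-(x 1)) * h2
  · show x 2 = 0
    linear_combination (b 1 * (a 2 * b 1 - a 1 * b 2) - b 0 * (a 0 * b 2 - a 2 * b 0)) * e0 +
      (a 0 * (a 0 * b 2 - a 2 * b 0) - a 1 * (a 2 * b 1 - a 1 * b 2)) * e1 +
      (-(a 0 * b 1 - a 1 * b 0)) * e2 +
      (x 2 * (a 0 * b 0 + a 1 * b 1 - a 2 * b 2)) * h3 +
      (-(x 2) * (b 0 * b 0 + b 1 * b 1 - b 2 * b 2)) * h1 + (-(x 2)) * h2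

lemma decomp (a b w x : Fin 3 → ℝ) (hs : posOrth a b w) (hx : mink x w = 0) :
    x = (mink x a) • a + (mink x b) • b := by
  obtain ⟨hab, haw, hbw, haa, hbb, hww, hc⟩ := hs
  have h : x - ((mink x a) • a + (mink x b) • b) = 0 := by
    apply span_zero a b _ haa hbb hab
    · rw [mink_sub_left, mink_add_left, mink_smul_left, mink_smul_left, haa,
        mink_comm b a, hab]; ring
    · rw [mink_sub_left, mink_add_left, mink_smul_left, mink_smul_left, hbb, hab]; ring
    · rw [hc, mink_sub_left, mink_add_left, mink_smul_left, mink_smul_left, hx, haw, hbw]; ring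
  exact sub_eq_zero.mp h

lemma mcross_combo (a b : Fin 3 → ℝ) (p q c d : ℝ) :
    mcross (p • a + q • b) (c • a + d • b) = (p * d - q * c) • mcross a b := by
  funext i
  fin_cases i <;>
    simp [mcross, Pi.add_apply, Pi.smul_apply, smul_eq_mul] <;> ring

lemma mink_combo (a b : Fin 3 → ℝ) (p q c d : ℝ) (hab : mink a b = 0)
    (haa : mink a a = 1) (hbb : mink b b = 1) :
    mink (p • a + q • b) (c • a + d • b) = p * c + q * d := by
  simp only [mink, Pi.add_apply, Pi.smul_apply, smul_eq_mul] at *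
  linear_combination (p * c) * haa + (q * d) * hbb + (p * d + q * c) * hab

/-- two circle solutions agree up to a phase shift if and only if they
have the same center w. -/
theorem stmt_11 (r : ℝ) (hr : 0 < r) (v₀ v₁ w v₀' v₁' w' : Fin 3 → ℝ)
    (hsys : posOrth v₀ v₁ w) (hsys' : posOrth v₀' v₁' w') :
    (∃ θ : ℝ, ∀ t : ℝ,
      Real.sqrt (1 + r ^ 2) • w + (r * Real.cos (2 * Real.pi * t)) • v₁ +
          (r * Real.sin (2 * Real.pi * t)) • v₀ =
        Real.sqrt (1 + r ^ 2) • w' + (r * Real.cos (2 * Real.pi * (t + θ))) • v₁' +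
          (r * Real.sin (2 * Real.pi * (t + θ))) • v₀') ↔ w = w' := by
  have hS : Real.sqrt (1 + r ^ 2) ≠ 0 := by positivity
  constructor
  · rintro ⟨θ, hθ⟩
    have h0 := hθ 0
    have h1 := hθ (1/2 : ℝ)
    funext i
    have e0 := congrFun h0 i
    have e1 := congrFun h1 i
    have arg0 : 2 * π * ((1:ℝ)/2) = π := by ring
    have arg1 : 2 * π * ((1:ℝ)/2 + θ) = π + 2 * π * θ := by ring
    simp only [mul_zero, zero_add, Real.cos_zero, Real.sin_zero, arg0, arg1,
      Real.cos_pi, Real.sin_pi, Real.cos_add, Real.sin_add, Pi.add_apply,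
      Pi.smul_apply, smul_eq_mul] at e0 e1
    have key : Real.sqrt (1 + r ^ 2) * w i = Real.sqrt (1 + r ^ 2) * w' i := by
      nlinarith [e0, e1]
    exact mul_left_cancel₀ hS key
  · intro hww'
    subst hww'
    obtain ⟨hab, haw, hbw, haa, hbb, hww, hc⟩ := hsys
    set a : ℝ := mink v₀' v₀ with ha_def
    set b : ℝ := mink v₀' v₁ with hb_def
    set c : ℝ := mink v₁' v₀ with hc_def
    set d : ℝ := mink v₁' v₁ with hd_def
    have hd0 : v₀' = a • v₀ + b • v₁ :=
      decomp v₀ v₁ w v₀' ⟨hab, haw, hbw, haa, hbb, hww, hc⟩ hsys'.2.1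
    have hd1 : v₁' = c • v₀ + d • v₁ :=
      decomp v₀ v₁ w v₁' ⟨hab, haw, hbw, haa, hbb, hww, hc⟩ hsys'.2.2.1
    have ha2 : a ^ 2 + b ^ 2 = 1 := by
      have := hsys'.2.2.2.1
      rw [hd0] at this
      rw [mink_combo v₀ v₁ a b a b hab haa hbb] at this
      nlinarith [this]
    have hmix : a * c + b * d = 0 := by
      have := hsys'.1
      rw [hd0, hd1] at this
      rw [mink_combo v₀ v₁ a b c d hab haa hbb] at this
      linarith [this]
    have hdet : a * d - b * c = 1 := by
      have hcr := hsys'.2.2.2.2.2.2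
      rw [hd0, hd1, mcross_combo, hc] at hcr
      have h2 := congrFun hcr 2
      simp only [Pi.smul_apply, smul_eq_mul] at h2
      have hw2 : w 2 ≠ 0 := by
        intro h
        simp only [mink] at hww
        nlinarith [sq_nonneg (w 0), sq_nonneg (w 1), hww]
      have : (a * d - b * c) * w 2 = 1 * w 2 := by rw [h2]; ring
      exact mul_right_cancel₀ hw2 this
    have hcb : c = -b := by linear_combination a * hmix - b * hdet - c * ha2
    have hda : d = a := by linear_combination b * hmix + a * hdet - d * ha2
    -- choose the angle ψ
    have hale : -1 ≤ a ∧ a ≤ 1 := by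
      constructor <;> nlinarith [sq_nonneg b]
    set ψ : ℝ := if 0 ≤ b then Real.arccos a else -Real.arccos a with hψ_def
    have hcos : Real.cos ψ = a := by
      by_cases hb : 0 ≤ b <;> simp [hψ_def, hb, Real.cos_arccos hale.1 hale.2]
    have hsin : Real.sin ψ = b := by
      have hs : Real.sin (Real.arccos a) = Real.sqrt (1 - a ^ 2) := Real.sin_arccos a
      have h1a : (1 : ℝ) - a ^ 2 = b ^ 2 := by linarith
      by_cases hb : 0 ≤ b
      · simp only [hψ_def, if_pos hb, hs, h1a]
        rw [Real.sqrt_sq hb]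
      · push_neg at hb
        simp only [hψ_def, if_neg (not_le.mpr hb), Real.sin_neg, hs, h1a]
        rw [show b ^ 2 = (-b) ^ 2 by ring, Real.sqrt_sq (by linarith)]
        ring
    refine ⟨ψ / (2 * π), fun t => ?_⟩
    have harg : 2 * π * (t + ψ / (2 * π)) = 2 * π * t + ψ := by
      field_simp
    rw [harg, hd0, hd1, hcb, hda]
    funext i
    simp only [Pi.add_apply, Pi.smul_apply, smul_eq_mul, Real.cos_add, Real.sin_add,
      hcos, hsin]
    linear_combination (-((r * Real.cos (2 * π * t)) * v₁ i + (r * Real.sin (2 * π * t)) * v₀ i)) * ha2
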